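/- Let A : ℝ × ℝ → Matrix (n×n, ℝ) be twice continuously differentiable in (λ, ν), and set d(λ, ν) = det A(λ, ν). Fix ν₀ ∈ ℝ and write A⁰ = A(0, ν₀), A¹⁰ = ∂_λA(0, ν₀), A⁰¹ = ∂_νA(0, ν₀), A⁰² = (1/2)∂²_{νν}A(0, ν₀). Assume ker A⁰ is one-dimensional and spanned by u₀ ≠ 0, e_ad ≠ 0 spans ker (A⁰)ᵀ, and u₁ ∈ ℝⁿ satisfies A⁰¹u₀ + A⁰u₁ = 0. Then ∂_λd(0, ν₀)·∂²_{νν}d(0, ν₀) < 0 if and only if ⟨A¹⁰u₀, e_ad⟩·⟨A⁰²u₀ + A⁰¹u₁, e_ad⟩ < 0. -/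

import Mathlib

set_option maxHeartbeats 1000000

open Matrix



lemma det_norm_bound {n : ℕ} (m : Fin n → Fin n → ℝ) :
    ‖(Matrix.of m).det‖ ≤ (Nat.factorial n) * ∏ i, ‖m i‖ := by
  rw [Matrix.det_apply']
  refine le_trans (norm_sum_le _ _) ?_
  have hb : ∀ σ : Equiv.Perm (Fin n),
      ‖((Equiv.Perm.sign σ : ℤ) : ℝ) * ∏ i, m (σ i) i‖ ≤ ∏ i, ‖m i‖ := by
    intro σ
    rw [norm_mul]
    have hs : ‖((Equiv.Perm.sign σ : ℤ) : ℝ)‖ = 1 := by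
      rcases Int.units_eq_one_or (Equiv.Perm.sign σ) with h | h <;> simp [h]
    rw [hs, one_mul]
    calc ‖∏ i, m (σ i) i‖ ≤ ∏ i, ‖m (σ i) i‖ := le_of_eq (norm_prod _ _)
      _ ≤ ∏ i, ‖m (σ i)‖ := by
          refine Finset.prod_le_prod (fun _ _ => norm_nonneg _) (fun i _ => ?_)
          exact norm_le_pi_norm (m (σ i)) i
      _ = ∏ i, ‖m i‖ := Equiv.prod_comp σ (fun j => ‖m j‖)
  calc ∑ σ : Equiv.Perm (Fin n), ‖((Equiv.Perm.sign σ : ℤ) : ℝ) * ∏ i, m (σ i) i‖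
      ≤ ∑ _σ : Equiv.Perm (Fin n), ∏ i, ‖m i‖ := Finset.sum_le_sum fun σ _ => hb σ
    _ = (Nat.factorial n) * ∏ i, ‖m i‖ := by
        rw [Finset.sum_const, Finset.card_univ, Fintype.card_perm, Fintype.card_fin,
          nsmul_eq_mul]

noncomputable def detCML (n : ℕ) :
    ContinuousMultilinearMap ℝ (fun _ : Fin n => (Fin n → ℝ)) ℝ :=
  MultilinearMap.mkContinuous
    (Matrix.detRowAlternating : (Fin n → ℝ) [⋀^Fin n]→ₗ[ℝ] ℝ).toMultilinearMap
    (Nat.factorial n) (fun m => det_norm_bound m)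

lemma jacobi {n : ℕ} (B : ℝ → Matrix (Fin n) (Fin n) ℝ)
    (B' : Matrix (Fin n) (Fin n) ℝ) (t : ℝ)
    (h : ∀ i j, HasDerivAt (fun s => B s i j) (B' i j) t) :
    HasDerivAt (fun s => (B s).det)
      (∑ i, ((B t).updateRow i (B' i)).det) t := by
  have hr : HasDerivAt (fun s : ℝ => (fun i j => B s i j : Fin n → Fin n → ℝ))
      (fun i j => B' i j) t :=
    hasDerivAt_pi.2 fun i => hasDerivAt_pi.2 fun j => h i j
  have H := ((detCML n).hasFDerivAt (fun i j => B t i j : Fin n → Fin n → ℝ)).comp_hasDerivAt t hr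
  rw [ContinuousMultilinearMap.linearDeriv_apply] at H
  exact H



private lemma updateRow_comm {n : ℕ} (M : Matrix (Fin n) (Fin n) ℝ) {j k : Fin n}
    (h : j ≠ k) (r s : Fin n → ℝ) :
    (M.updateRow j r).updateRow k s = (M.updateRow k s).updateRow j r := by
  simp only [updateRow]
  exact Function.update_comm h r s M

lemma det_rows_expand {n : ℕ} (A : Matrix (Fin n) (Fin n) ℝ) (u v : Fin n → ℝ) :
    (Matrix.of (fun i => A i + u i • v)).det
      = A.det + ∑ i, u i * (A.updateRow i v).det := by
  set B : Finset (Fin n) → Matrix (Fin n) (Fin n) ℝ :=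
    fun s => Matrix.of (fun i => if i ∈ s then A i + u i • v else A i) with hB
  have hBrow : ∀ s i, B s i = if i ∈ s then A i + u i • v else A i := fun s i => rfl
  have hBins : ∀ (s : Finset (Fin n)) (j), j ∉ s →
      B (insert j s) = (B s).updateRow j (A j + u j • v) := by
    intro s j hj
    ext i l
    rcases eq_or_ne i j with rfl | hij
    · rw [updateRow_self]
      simp [hBrow]
    · rw [updateRow_ne hij]
      simp only [hBrow, Finset.mem_insert]
      simp [hij]
  have claim1 : ∀ (s : Finset (Fin n)) (k), k ∉ s →
      ((B s).updateRow k v).det = (A.updateRow k v).det := by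
    intro s
    induction s using Finset.induction_on with
    | empty =>
      intro k _
      have hBE : B ∅ = A := by ext i l; simp [hBrow]
      rw [hBE]
    | @insert j s hj ih =>
      intro k hk
      have hkj : k ≠ j := fun h => hk (h ▸ Finset.mem_insert_self j s)
      have hks : k ∉ s := fun h => hk (Finset.mem_insert_of_mem h)
      rw [hBins s j hj, _root_.updateRow_comm _ (Ne.symm hkj)]
      rw [det_updateRow_add, det_updateRow_smul]
      have h1 : ((B s).updateRow k v).updateRow j (A j) = (B s).updateRow k v := by
        have : ((B s).updateRow k v) j = A j := by
          rw [updateRow_ne (Ne.symm hkj)]; simp [hBrow, hj]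
        conv_lhs => rw [← this]
        exact updateRow_eq_self _ _
      have h2 : (((B s).updateRow k v).updateRow j v).det = 0 := by
        refine det_zero_of_row_eq (Ne.symm hkj) ?_
        rw [updateRow_self, updateRow_ne hkj, updateRow_self]
      rw [h1, h2, mul_zero, add_zero, ih k hks]
  have claim2 : ∀ s : Finset (Fin n),
      (B s).det = A.det + ∑ i ∈ s, u i * (A.updateRow i v).det := by
    intro s
    induction s using Finset.induction_on with
    | empty =>
      have hBE : B ∅ = A := by ext i l; simp [hBrow]
      rw [hBE]; simp
    | @insert j s hj ih =>
      rw [hBins s j hj, det_updateRow_add, det_updateRow_smul]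
      have h1 : (B s).updateRow j (A j) = B s := by
        have : (B s) j = A j := by simp [hBrow, hj]
        conv_lhs => rw [← this]
        exact updateRow_eq_self _ _
      rw [h1, claim1 s j hj, ih, Finset.sum_insert hj]
      ring
  have hBU : B Finset.univ = Matrix.of (fun i => A i + u i • v) := by
    ext i l; simp [hBrow]
  rw [← hBU, claim2 Finset.univ]

lemma adjugate_rank_one {n : ℕ} (A0 : Matrix (Fin n) (Fin n) ℝ)
    (u₀ e_ad : Fin n → ℝ) (hu₀ : u₀ ≠ 0) (he : e_ad ≠ 0)
    (hker : LinearMap.ker A0.mulVecLin = Submodule.span ℝ {u₀})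
    (hcoker : LinearMap.ker A0.transpose.mulVecLin = Submodule.span ℝ {e_ad}) :
    ∃ c : ℝ, c ≠ 0 ∧ ∀ i j, adjugate A0 i j = c * u₀ i * e_ad j := by
  have hmem : ∀ x : Fin n → ℝ, A0 *ᵥ x = 0 ↔ ∃ a : ℝ, x = a • u₀ := by
    intro x
    constructor
    · intro hx
      have : x ∈ LinearMap.ker A0.mulVecLin := by
        rw [LinearMap.mem_ker, mulVecLin_apply, hx]
      rw [hker, Submodule.mem_span_singleton] at this
      obtain ⟨a, ha⟩ := this
      exact ⟨a, ha.symm⟩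
    · rintro ⟨a, rfl⟩
      have : (a • u₀) ∈ LinearMap.ker A0.mulVecLin := by
        rw [hker]
        exact Submodule.smul_mem _ a (Submodule.mem_span_singleton_self u₀)
      rwa [LinearMap.mem_ker, mulVecLin_apply] at this
  have hAu : A0 *ᵥ u₀ = 0 := (hmem u₀).2 ⟨1, (one_smul _ _).symm⟩
  have hATe : A0ᵀ *ᵥ e_ad = 0 := by
    have : e_ad ∈ LinearMap.ker A0.transpose.mulVecLin := by
      rw [hcoker]; exact Submodule.mem_span_singleton_self e_ad
    rwa [LinearMap.mem_ker, mulVecLin_apply] at this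
  have hdet : A0.det = 0 := (Matrix.exists_mulVec_eq_zero_iff).1 ⟨u₀, hu₀, hAu⟩
  have hAadj : A0 * adjugate A0 = 0 := by rw [mul_adjugate, hdet, zero_smul]
  have hadjA : adjugate A0 * A0 = 0 := by rw [adjugate_mul, hdet, zero_smul]
  -- columns of adjugate
  have hcol : ∀ j, ∃ a : ℝ, (fun i => adjugate A0 i j) = a • u₀ := by
    intro j
    refine (hmem _).1 ?_
    ext i
    have : (A0 *ᵥ fun k => adjugate A0 k j) i = (A0 * adjugate A0) i j := by
      simp [mulVec, dotProduct, Matrix.mul_apply]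
    rw [this, hAadj]; rfl
  choose d hd using hcol
  -- rows of adjugate
  have hrow : ∀ i, ∃ b : ℝ, ∀ j, adjugate A0 i j = b * e_ad j := by
    intro i
    have hxker : A0ᵀ *ᵥ (fun j => adjugate A0 i j) = 0 := by
      ext k
      have : (A0ᵀ *ᵥ fun j => adjugate A0 i j) k = (adjugate A0 * A0) i k := by
        simp [mulVec, dotProduct, Matrix.mul_apply, transpose_apply, mul_comm]
      rw [this, hadjA]; rfl
    have : (fun j => adjugate A0 i j) ∈ LinearMap.ker A0.transpose.mulVecLin := by
      rw [LinearMap.mem_ker, mulVecLin_apply, hxker]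
    rw [hcoker, Submodule.mem_span_singleton] at this
    obtain ⟨b, hb⟩ := this
    refine ⟨b, fun j => ?_⟩
    have := congrFun hb j
    simp only [Pi.smul_apply, smul_eq_mul] at this
    rw [← this]
  choose ebar heb using hrow
  -- adjugate ≠ 0
  have hBdet : (Matrix.of (fun i => A0 i + e_ad i • u₀)).det ≠ 0 := by
    rw [Ne, ← Matrix.exists_mulVec_eq_zero_iff]
    rintro ⟨v, hv, hBv⟩
    have hBsplit : A0 *ᵥ v + (u₀ ⬝ᵥ v) • e_ad = 0 := by
      rw [← hBv]
      ext i
      simp only [mulVec, dotProduct, Matrix.of_apply, Pi.add_apply, Pi.smul_apply,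
        smul_eq_mul]
      have hx : ∑ x, (A0 i x + e_ad i * u₀ x) * v x
          = ∑ x, A0 i x * v x + e_ad i * ∑ x, u₀ x * v x := by
        rw [Finset.mul_sum, ← Finset.sum_add_distrib]
        exact Finset.sum_congr rfl fun x _ => by ring
      rw [hx]
      ring
    have hBv' : ∀ i, (A0 *ᵥ v) i + e_ad i * (u₀ ⬝ᵥ v) = 0 := by
      intro i
      have := congrFun hBsplit i
      simpa [mul_comm] using this
    have hdot : e_ad ⬝ᵥ (A0 *ᵥ v) + (e_ad ⬝ᵥ e_ad) * (u₀ ⬝ᵥ v) = 0 := by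
      have := congrArg (fun w => e_ad ⬝ᵥ w) hBsplit
      simpa [dotProduct_add, dotProduct_smul, smul_eq_mul, mul_comm] using this
    have hdA : e_ad ⬝ᵥ (A0 *ᵥ v) = 0 := by
      rw [Matrix.dotProduct_mulVec, ← Matrix.mulVec_transpose, hATe, zero_dotProduct]
    rw [hdA, zero_add, mul_eq_zero] at hdot
    have hee : e_ad ⬝ᵥ e_ad ≠ 0 := fun h => he (dotProduct_self_eq_zero.1 h)
    have huv : u₀ ⬝ᵥ v = 0 := hdot.resolve_left hee
    have hA0v : A0 *ᵥ v = 0 := by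
      ext i
      have := hBv' i
      rw [huv, mul_zero, add_zero] at this
      exact this
    obtain ⟨a, rfl⟩ := (hmem v).1 hA0v
    have : a * (u₀ ⬝ᵥ u₀) = 0 := by
      rw [← huv]
      simp [dotProduct_smul, smul_eq_mul]
    have huu : u₀ ⬝ᵥ u₀ ≠ 0 := fun h => hu₀ (dotProduct_self_eq_zero.1 h)
    rcases mul_eq_zero.1 this with rfl | h
    · exact hv (zero_smul _ _)
    · exact huu h
  have hexp : (Matrix.of (fun i => A0 i + e_ad i • u₀)).det
      = ∑ i, e_ad i * ∑ j, adjugate A0 j i * u₀ j := by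
    rw [det_rows_expand, hdet, zero_add]
    refine Finset.sum_congr rfl fun i _ => ?_
    congr 1
    rw [← Matrix.cramer_transpose_apply, Matrix.cramer_eq_adjugate_mulVec,
      ← Matrix.adjugate_transpose]
    simp [mulVec, dotProduct, transpose_apply]
  have hadj_ne : adjugate A0 ≠ 0 := by
    intro h0
    apply hBdet
    rw [hexp]
    simp [h0]
  -- extract c
  obtain ⟨i0, j0, hij⟩ : ∃ i j, adjugate A0 i j ≠ 0 := by
    by_contra hcon
    push_neg at hcon
    exact hadj_ne (by ext i j; simpa using hcon i j)
  have hd' : ∀ i j, adjugate A0 i j = d j * u₀ i := by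
    intro i j
    have := congrFun (hd j) i
    simpa using this
  have hu0i0 : u₀ i0 ≠ 0 := fun h => hij (by rw [hd' i0 j0, h, mul_zero])
  refine ⟨ebar i0 / u₀ i0, ?_, ?_⟩
  · intro hc
    apply hij
    rw [heb i0 j0]
    rcases div_eq_zero_iff.1 hc with h | h
    · rw [h, zero_mul]
    · exact absurd h hu0i0
  · intro i j
    have key : d j = ebar i0 / u₀ i0 * e_ad j := by
      have h1 : d j * u₀ i0 = ebar i0 * e_ad j := by rw [← hd' i0 j, heb i0 j]
      field_simp
      linarith [h1]
    rw [hd' i j, key]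
    ring

lemma updRow_det {n : ℕ} (M : Matrix (Fin n) (Fin n) ℝ) (i : Fin n) (v : Fin n → ℝ) :
    (M.updateRow i v).det = ∑ j, adjugate M j i * v j := by
  rw [← Matrix.cramer_transpose_apply, Matrix.cramer_eq_adjugate_mulVec,
    ← Matrix.adjugate_transpose]
  simp [mulVec, dotProduct, transpose_apply, mul_comm]

lemma diff2 {f : ℝ → ℝ} (h : ContDiff ℝ 2 f) :
    Differentiable ℝ f ∧ Differentiable ℝ (deriv f) := by
  rw [show (2 : WithTop ℕ∞) = 1 + 1 by norm_num, contDiff_succ_iff_deriv] at h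
  exact ⟨h.1, h.2.2.differentiable one_ne_zero⟩

/-- Equivalence of the determinant-based sign condition `∂_λd · ∂²_{νν}d < 0` for a
simple double root with the matrix-pencil (Jordan-chain) sign condition
`⟨A¹⁰u₀, e_ad⟩ · ⟨A⁰²u₀ + A⁰¹u₁, e_ad⟩ < 0`. -/
theorem stmt5 (n : ℕ) (A : ℝ → ℝ → Matrix (Fin n) (Fin n) ℝ)
    (hA : ∀ i j : Fin n, ContDiff ℝ 2 (fun p : ℝ × ℝ => A p.1 p.2 i j))
    (ν₀ : ℝ)
    (A0 A10 A01 A02 : Matrix (Fin n) (Fin n) ℝ)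
    (hA0 : A0 = A 0 ν₀)
    (hA10 : ∀ i j : Fin n, A10 i j = deriv (fun l : ℝ => A l ν₀ i j) 0)
    (hA01 : ∀ i j : Fin n, A01 i j = deriv (fun ν : ℝ => A 0 ν i j) ν₀)
    (hA02 : ∀ i j : Fin n, A02 i j = (1/2) * iteratedDeriv 2 (fun ν : ℝ => A 0 ν i j) ν₀)
    (u₀ : Fin n → ℝ) (hu₀ : u₀ ≠ 0)
    (hker : LinearMap.ker A0.mulVecLin = Submodule.span ℝ {u₀})
    (e_ad : Fin n → ℝ) (he : e_ad ≠ 0)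
    (hcoker : LinearMap.ker A0.transpose.mulVecLin = Submodule.span ℝ {e_ad})
    (u₁ : Fin n → ℝ) (hu₁ : A01 *ᵥ u₀ + A0 *ᵥ u₁ = 0) :
    (deriv (fun l : ℝ => (A l ν₀).det) 0
        * iteratedDeriv 2 (fun ν : ℝ => (A 0 ν).det) ν₀ < 0) ↔
    ((A10 *ᵥ u₀) ⬝ᵥ e_ad) * ((A02 *ᵥ u₀ + A01 *ᵥ u₁) ⬝ᵥ e_ad) < 0 := by
  -- basic smoothness of entries in each variable
  have hlam : ∀ i j, ContDiff ℝ 2 (fun l : ℝ => A l ν₀ i j) := fun i j =>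
    (hA i j).comp (contDiff_id.prodMk contDiff_const)
  have hν : ∀ i j, ContDiff ℝ 2 (fun ν : ℝ => A 0 ν i j) := fun i j =>
    (hA i j).comp (contDiff_const.prodMk contDiff_id)
  obtain ⟨c, hc, hadj⟩ := adjugate_rank_one A0 u₀ e_ad hu₀ he hker hcoker
  -- kernel facts
  have hAu : A0 *ᵥ u₀ = 0 := by
    have : u₀ ∈ LinearMap.ker A0.mulVecLin := by
      rw [hker]; exact Submodule.mem_span_singleton_self u₀
    rwa [LinearMap.mem_ker, mulVecLin_apply] at this
  have hmem : ∀ x : Fin n → ℝ, A0 *ᵥ x = 0 → ∃ a : ℝ, x = a • u₀ := by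
    intro x hx
    have : x ∈ LinearMap.ker A0.mulVecLin := by
      rw [LinearMap.mem_ker, mulVecLin_apply, hx]
    rw [hker, Submodule.mem_span_singleton] at this
    obtain ⟨a, ha⟩ := this
    exact ⟨a, ha.symm⟩
  have hATe : A0ᵀ *ᵥ e_ad = 0 := by
    have : e_ad ∈ LinearMap.ker A0.transpose.mulVecLin := by
      rw [hcoker]; exact Submodule.mem_span_singleton_self e_ad
    rwa [LinearMap.mem_ker, mulVecLin_apply] at this
  have hu0ne : ∃ i0, u₀ i0 ≠ 0 := by
    by_contra hcon
    push_neg at hcon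
    exact hu₀ (funext fun i => hcon i)
  obtain ⟨i0, hi0⟩ := hu0ne
  -- summation helper
  have hsum : ∀ M : Matrix (Fin n) (Fin n) ℝ,
      (∑ i, ∑ j, adjugate A0 j i * M i j) = c * (e_ad ⬝ᵥ (M *ᵥ u₀)) := by
    intro M
    simp only [dotProduct, mulVec, Finset.mul_sum]
    refine Finset.sum_congr rfl fun i _ => ?_
    refine Finset.sum_congr rfl fun j _ => ?_
    rw [hadj j i]
    ring
  -- first factor
  have hder1 : ∀ i j, HasDerivAt (fun l : ℝ => A l ν₀ i j) (A10 i j) 0 := by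
    intro i j
    rw [hA10 i j]
    exact (((hlam i j).differentiable two_ne_zero) 0).hasDerivAt
  have hf : HasDerivAt (fun l : ℝ => (A l ν₀).det)
      (∑ i, ((A 0 ν₀).updateRow i (A10 i)).det) 0 :=
    jacobi (fun l => A l ν₀) A10 0 hder1
  have hf' : deriv (fun l : ℝ => (A l ν₀).det) 0 = c * (e_ad ⬝ᵥ (A10 *ᵥ u₀)) := by
    rw [hf.deriv, ← hA0]
    rw [← hsum A10]
    exact Finset.sum_congr rfl fun i _ => updRow_det A0 i (A10 i)
  -- second variable: entrywise derivative matrix as a function of ν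
  set A1 : ℝ → Matrix (Fin n) (Fin n) ℝ :=
    fun ν => Matrix.of (fun i j => deriv (fun s : ℝ => A 0 s i j) ν) with hA1
  have hA1ν₀ : A1 ν₀ = A01 := by
    ext i j; rw [hA1]; exact (hA01 i j).symm
  have hgν : ∀ ν : ℝ, HasDerivAt (fun s : ℝ => (A 0 s).det)
      (∑ i, ((A 0 ν).updateRow i (A1 ν i)).det) ν := by
    intro ν
    refine jacobi (fun s => A 0 s) (A1 ν) ν fun i j => ?_
    exact ((diff2 (hν i j)).1 ν).hasDerivAt
  have hderivg : deriv (fun s : ℝ => (A 0 s).det)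
      = fun ν => ∑ i, ∑ j, adjugate (A 0 ν) j i * A1 ν i j := by
    funext ν
    rw [(hgν ν).deriv]
    exact Finset.sum_congr rfl fun i _ => updRow_det (A 0 ν) i (A1 ν i)
  -- derivative of adjugate entries
  have hadjDiff : ∀ p q : Fin n, DifferentiableAt ℝ (fun ν => adjugate (A 0 ν) p q) ν₀ := by
    intro p q
    have : (fun ν => adjugate (A 0 ν) p q)
        = fun ν => (((A 0 ν).updateRow q (Pi.single p 1)).det) := by
      funext ν; rw [Matrix.adjugate_apply]
    rw [this]
    have := jacobi (fun ν => (A 0 ν).updateRow q (Pi.single p 1))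
      ((A1 ν₀).updateRow q 0) ν₀ ?_
    · exact this.differentiableAt
    · intro i j
      rcases eq_or_ne i q with rfl | hiq
      · simp only [updateRow_self]
        exact hasDerivAt_const ν₀ _
      · simp only [Matrix.updateRow_ne hiq]
        exact ((diff2 (hν i j)).1 ν₀).hasDerivAt
  set Pm : Matrix (Fin n) (Fin n) ℝ :=
    Matrix.of (fun p q => deriv (fun ν => adjugate (A 0 ν) p q) ν₀) with hPm
  have hadjD : ∀ p q : Fin n, HasDerivAt (fun ν => adjugate (A 0 ν) p q) (Pm p q) ν₀ :=
    fun p q => (hadjDiff p q).hasDerivAt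
  -- derivative of A1 entries
  have hA1D : ∀ i j, HasDerivAt (fun ν => A1 ν i j) (2 * A02 i j) ν₀ := by
    intro i j
    have hdd : HasDerivAt (fun ν => A1 ν i j)
        (deriv (deriv (fun s : ℝ => A 0 s i j)) ν₀) ν₀ :=
      ((diff2 (hν i j)).2 ν₀).hasDerivAt
    have : deriv (deriv (fun s : ℝ => A 0 s i j)) ν₀ = 2 * A02 i j := by
      rw [hA02 i j]
      rw [show (2 : ℕ) = 1 + 1 from rfl, iteratedDeriv_succ, iteratedDeriv_one]
      ring
    rwa [this] at hdd
  -- second derivative of g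
  have hg2 : iteratedDeriv 2 (fun ν : ℝ => (A 0 ν).det) ν₀
      = ∑ i, ∑ j, (Pm j i * A01 i j + adjugate A0 j i * (2 * A02 i j)) := by
    rw [show (2 : ℕ) = 1 + 1 from rfl, iteratedDeriv_succ, iteratedDeriv_one, hderivg]
    have H : HasDerivAt (fun ν => ∑ i, ∑ j, adjugate (A 0 ν) j i * A1 ν i j)
        (∑ i, ∑ j, (Pm j i * A01 i j + adjugate A0 j i * (2 * A02 i j))) ν₀ := by
      refine HasDerivAt.fun_sum fun i _ => HasDerivAt.fun_sum fun j _ => ?_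
      have := (hadjD j i).mul (hA1D i j)
      have he1 : A1 ν₀ i j = A01 i j := by rw [hA1ν₀]
      have he2 : adjugate (A 0 ν₀) j i = adjugate A0 j i := by rw [← hA0]
      rwa [he1, he2] at this
    exact H.deriv
  -- gd = 0
  have hgd0 : (∑ i, ∑ j, adjugate A0 j i * A01 i j) = 0 := by
    rw [hsum A01]
    have : A01 *ᵥ u₀ = -(A0 *ᵥ u₁) := by
      rw [eq_neg_iff_add_eq_zero]; exact hu₁
    rw [this, dotProduct_neg, Matrix.dotProduct_mulVec, ← Matrix.mulVec_transpose, hATe,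
      zero_dotProduct, neg_zero, mul_zero]
  -- relation 2 : A * adj, differentiated
  have hentry : ∀ i k, HasDerivAt (fun ν => A 0 ν i k) (A01 i k) ν₀ := by
    intro i k
    rw [hA01 i k]
    exact ((diff2 (hν i k)).1 ν₀).hasDerivAt
  have hgdzero : (∑ i, ((A 0 ν₀).updateRow i (A1 ν₀ i)).det) = 0 := by
    rw [hA1ν₀, show (A 0 ν₀) = A0 from hA0.symm, ← hgd0]
    exact Finset.sum_congr rfl fun i _ => updRow_det A0 i (A01 i)
  have hrel2 : ∀ i j, (∑ k, (A01 i k * adjugate A0 k j + A0 i k * Pm k j)) = 0 := by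
    intro i j
    have hF : HasDerivAt (fun ν => ∑ k, A 0 ν i k * adjugate (A 0 ν) k j)
        (∑ k, (A01 i k * adjugate A0 k j + A0 i k * Pm k j)) ν₀ := by
      refine HasDerivAt.fun_sum fun k _ => ?_
      have := (hentry i k).mul (hadjD k j)
      rwa [show (A 0 ν₀) = A0 from hA0.symm] at this
    have hG : HasDerivAt (fun ν => (A 0 ν).det * (1 : Matrix (Fin n) (Fin n) ℝ) i j) 0 ν₀ := by
      have h2 := (hgν ν₀).mul_const ((1 : Matrix (Fin n) (Fin n) ℝ) i j)
      rwa [hgdzero, zero_mul] at h2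
    have heq : (fun ν => ∑ k, A 0 ν i k * adjugate (A 0 ν) k j)
        = fun ν => (A 0 ν).det * (1 : Matrix (Fin n) (Fin n) ℝ) i j := by
      funext ν
      have := congrFun (congrFun (Matrix.mul_adjugate (A 0 ν)) i) j
      simpa [Matrix.mul_apply, Matrix.smul_apply, smul_eq_mul] using this
    rw [heq] at hF
    exact hF.unique hG
  have hrel1 : ∀ i j, (∑ k, (Pm i k * A0 k j + adjugate A0 i k * A01 k j)) = 0 := by
    intro i j
    have hF : HasDerivAt (fun ν => ∑ k, adjugate (A 0 ν) i k * A 0 ν k j)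
        (∑ k, (Pm i k * A0 k j + adjugate A0 i k * A01 k j)) ν₀ := by
      refine HasDerivAt.fun_sum fun k _ => ?_
      have := (hadjD i k).mul (hentry k j)
      rwa [show (A 0 ν₀) = A0 from hA0.symm] at this
    have hG : HasDerivAt (fun ν => (A 0 ν).det * (1 : Matrix (Fin n) (Fin n) ℝ) i j) 0 ν₀ := by
      have h2 := (hgν ν₀).mul_const ((1 : Matrix (Fin n) (Fin n) ℝ) i j)
      rwa [hgdzero, zero_mul] at h2
    have heq : (fun ν => ∑ k, adjugate (A 0 ν) i k * A 0 ν k j)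
        = fun ν => (A 0 ν).det * (1 : Matrix (Fin n) (Fin n) ℝ) i j := by
      funext ν
      have := congrFun (congrFun (Matrix.adjugate_mul (A 0 ν)) i) j
      simpa [Matrix.mul_apply, Matrix.smul_apply, smul_eq_mul] using this
    rw [heq] at hF
    exact hF.unique hG
  -- structure of columns of Pm
  have hA01u : A01 *ᵥ u₀ = -(A0 *ᵥ u₁) := by
    rw [eq_neg_iff_add_eq_zero]; exact hu₁
  have hPcol : ∀ j, ∃ wj : ℝ, ∀ i, Pm i j = c * e_ad j * u₁ i + wj * u₀ i := by
    intro j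
    set x : Fin n → ℝ := (fun k => Pm k j) - (c * e_ad j) • u₁ with hx
    have hx0 : A0 *ᵥ x = 0 := by
      ext i
      have h1 := hrel2 i j
      rw [Finset.sum_add_distrib] at h1
      have h2 : (∑ k, A01 i k * adjugate A0 k j) = -(c * e_ad j * (A0 *ᵥ u₁) i) := by
        have : (∑ k, A01 i k * adjugate A0 k j)
            = c * e_ad j * (∑ k, A01 i k * u₀ k) := by
          rw [Finset.mul_sum]
          refine Finset.sum_congr rfl fun k _ => ?_
          rw [hadj k j]; ring
        rw [this, show (∑ k, A01 i k * u₀ k) = (A01 *ᵥ u₀) i from rfl, hA01u]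
        simp
      have h3 : (∑ k, A0 i k * Pm k j) = c * e_ad j * (A0 *ᵥ u₁) i := by
        rw [h2] at h1; linarith
      have h4 : (A0 *ᵥ x) i
          = (∑ k, A0 i k * Pm k j) - c * e_ad j * (A0 *ᵥ u₁) i := by
        simp only [hx, mulVec, dotProduct, Pi.sub_apply, Pi.smul_apply, smul_eq_mul,
          Finset.mul_sum]
        rw [← Finset.sum_sub_distrib]
        refine Finset.sum_congr rfl fun k _ => by ring
      rw [h4, h3]; simp
    obtain ⟨a, ha⟩ := hmem x hx0
    refine ⟨a, fun i => ?_⟩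
    have := congrFun ha i
    simp only [hx, Pi.sub_apply, Pi.smul_apply, smul_eq_mul] at this
    linarith [this]
  choose w hw using hPcol
  -- A0ᵀ *ᵥ w = -c • (A01ᵀ *ᵥ e_ad)
  have hATw : ∀ jj, (A0ᵀ *ᵥ w) jj = -(c * (A01ᵀ *ᵥ e_ad) jj) := by
    intro jj
    have h1 := hrel1 i0 jj
    rw [Finset.sum_add_distrib] at h1
    have h2 : (∑ k, Pm i0 k * A0 k jj)
        = c * u₁ i0 * (A0ᵀ *ᵥ e_ad) jj + u₀ i0 * (A0ᵀ *ᵥ w) jj := by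
      have hv1 : (A0ᵀ *ᵥ e_ad) jj = ∑ k, A0 k jj * e_ad k := rfl
      have hv2 : (A0ᵀ *ᵥ w) jj = ∑ k, A0 k jj * w k := rfl
      rw [hv1, hv2, Finset.mul_sum, Finset.mul_sum, ← Finset.sum_add_distrib]
      exact Finset.sum_congr rfl fun k _ => by rw [hw k i0]; ring
    have h3 : (∑ k, adjugate A0 i0 k * A01 k jj)
        = c * u₀ i0 * (A01ᵀ *ᵥ e_ad) jj := by
      have hv : (A01ᵀ *ᵥ e_ad) jj = ∑ k, A01 k jj * e_ad k := rfl
      rw [hv, Finset.mul_sum]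
      exact Finset.sum_congr rfl fun k _ => by rw [hadj i0 k]; ring
    rw [h2, h3, congrFun hATe jj] at h1
    simp only [Pi.zero_apply, mul_zero, zero_add] at h1
    have : u₀ i0 * ((A0ᵀ *ᵥ w) jj + c * (A01ᵀ *ᵥ e_ad) jj) = 0 := by linarith
    rcases mul_eq_zero.1 this with h | h
    · exact absurd h hi0
    · linarith
  -- the cross term
  have hT : (∑ i, ∑ j, Pm j i * A01 i j) = 2 * c * (e_ad ⬝ᵥ (A01 *ᵥ u₁)) := by
    have hsplit : (∑ i, ∑ j, Pm j i * A01 i j)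
        = c * (e_ad ⬝ᵥ (A01 *ᵥ u₁)) + (w ⬝ᵥ (A01 *ᵥ u₀)) := by
      have : ∀ i, (∑ j, Pm j i * A01 i j)
          = c * (e_ad i * (A01 *ᵥ u₁) i) + w i * (A01 *ᵥ u₀) i := by
        intro i
        have : ∀ j, Pm j i * A01 i j
            = c * (e_ad i * (A01 i j * u₁ j)) + w i * (A01 i j * u₀ j) := by
          intro j
          rw [hw i j]; ring
        rw [Finset.sum_congr rfl fun j _ => this j, Finset.sum_add_distrib]
        simp only [mulVec, dotProduct, Finset.mul_sum]
      rw [Finset.sum_congr rfl fun i _ => this i, Finset.sum_add_distrib]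
      simp only [dotProduct, mulVec, Finset.mul_sum]
    have hwA : (w ⬝ᵥ (A01 *ᵥ u₀)) = c * (e_ad ⬝ᵥ (A01 *ᵥ u₁)) := by
      have h5 : (A0ᵀ *ᵥ w) ⬝ᵥ u₁ = -(c * ((A01ᵀ *ᵥ e_ad) ⬝ᵥ u₁)) := by
        simp only [dotProduct, Finset.mul_sum, ← Finset.sum_neg_distrib]
        refine Finset.sum_congr rfl fun jj _ => ?_
        rw [hATw jj]; ring
      rw [hA01u, dotProduct_neg, Matrix.dotProduct_mulVec, ← Matrix.mulVec_transpose,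
        h5, neg_neg]
      congr 1
      rw [Matrix.mulVec_transpose, ← Matrix.dotProduct_mulVec]
    rw [hsplit, hwA]; ring
  -- assemble second derivative
  have hg2' : iteratedDeriv 2 (fun ν : ℝ => (A 0 ν).det) ν₀
      = 2 * c * ((A02 *ᵥ u₀ + A01 *ᵥ u₁) ⬝ᵥ e_ad) := by
    rw [hg2]
    have hsplit2 : (∑ i, ∑ j, (Pm j i * A01 i j + adjugate A0 j i * (2 * A02 i j)))
        = (∑ i, ∑ j, Pm j i * A01 i j)
          + ∑ i, ∑ j, adjugate A0 j i * (((2 : ℝ) • A02) i j) := by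
      simp only [Finset.sum_add_distrib, Matrix.smul_apply, smul_eq_mul]
    rw [hsplit2, hT, hsum ((2 : ℝ) • A02), smul_mulVec, dotProduct_smul,
      add_dotProduct, smul_eq_mul, dotProduct_comm (A02 *ᵥ u₀) e_ad,
      dotProduct_comm (A01 *ᵥ u₁) e_ad]
    ring
  rw [hf', hg2', dotProduct_comm (A10 *ᵥ u₀) e_ad]
  have hc2 : 0 < c * c := mul_self_pos.2 hc
  constructor
  · intro h
    by_contra hXY
    push_neg at hXY
    nlinarith
  · intro h
    nlinarith
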